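/- Let $F : \mathbb{C}^2 \to \mathbb{C}^2$ be a proper polynomial map, let $C(F) = \{J(F) = 0\}$ be its critical curve and $\Delta(F) = F(C(F))$ its discriminant. Suppose $p \in \Delta(F)$ with $F^{-1}(p) \cap C(F) = \{q_1, q_2\}$, $q_1 \neq q_2$, both smooth points of $C(F)$ at which $dF$ restricted to $T_{q_i}C(F)$ is nonzero. Then $\Delta(F)$ has a normal crossing at $p$ if and only if the vectors $(J_{1,1}(F)(q_1), J_{1,2}(F)(q_1))$ and $(J_{1,1}(F)(q_2), J_{1,2}(F)(q_2))$ are linearly independent, i.e. $J_{1,1}(F)(q_1) J_{1,2}(F)(q_2) - J_{1,2}(F)(q_1) J_{1,1}(F)(q_2) \neq 0$. -/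

import Mathlib

open MvPolynomial Filter Topology

/-- A plane curve `Δ` has a normal crossing at `p` if near `p` it is the union of
two smooth analytic branches with transverse tangents. -/
def NormalCrossingAt (Δ : Set (Fin 2 → ℂ)) (p : Fin 2 → ℂ) : Prop :=
  ∃ φ ψ : (Fin 2 → ℂ) → ℂ, AnalyticAt ℂ φ p ∧ AnalyticAt ℂ ψ p ∧
    φ p = 0 ∧ ψ p = 0 ∧
    LinearIndependent ℂ ![fderiv ℂ φ p, fderiv ℂ ψ p] ∧
    ∀ᶠ z in nhds p, (z ∈ Δ ↔ (φ z = 0 ∨ ψ z = 0))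


set_option maxHeartbeats 1000000

noncomputable section NormalCrossingAux

local notation "E2" => (Fin 2 → ℂ)

lemma analytic_local_inverse {E F : Type*} [NormedAddCommGroup E] [NormedSpace ℂ E]
    [NormedAddCommGroup F] [NormedSpace ℂ F] [CompleteSpace E] [CompleteSpace F]
    {f : E → F} {a : E} (hf : AnalyticAt ℂ f a) (e : E ≃L[ℂ] F)
    (hf' : HasFDerivAt f (e : E →L[ℂ] F) a) :
    ∃ g : F → E, AnalyticAt ℂ g (f a) ∧ g (f a) = a ∧
      (∀ᶠ x in 𝓝 a, g (f x) = x) ∧ (∀ᶠ y in 𝓝 (f a), f (g y) = y) ∧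
      HasFDerivAt g (e.symm : F →L[ℂ] E) (f a) := by
  have hs : HasStrictFDerivAt f (e : E →L[ℂ] F) a := by
    have h1 := hf.hasStrictFDerivAt
    rwa [hf'.fderiv] at h1
  refine ⟨hs.localInverse f e a, ?_, hs.localInverse_apply_image,
    hs.eventually_left_inverse, hs.eventually_right_inverse, hs.to_localInverse.hasFDerivAt⟩
  obtain ⟨p, hp⟩ := hf
  have hp1 : p 1 = (continuousMultilinearCurryFin1 ℂ E F).symm (e : E →L[ℂ] F) := by
    have h2 := hp.hasFDerivAt
    have := h2.unique hf'
    rw [← this]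
    simp
  have hmem := hs.mem_toOpenPartialHomeomorph_source (f := f)
  have hcoe : ((hs.toOpenPartialHomeomorph f : OpenPartialHomeomorph E F) : E → F) = f :=
    hs.toOpenPartialHomeomorph_coe
  have hp' : HasFPowerSeriesAt (hs.toOpenPartialHomeomorph f) p a := by rwa [hcoe]
  have := (hs.toOpenPartialHomeomorph f).hasFPowerSeriesAt_symm hmem hp' hp1
  rw [hcoe] at this
  exact ⟨_, this⟩

lemma vec_expand (z : E2) : z = z 0 • ![1,0] + z 1 • ![0,1] := by
  funext i; fin_cases i <;> simp

lemma vec_ne_zero {u : E2} (h : u ≠ 0) : u 0 ≠ 0 ∨ u 1 ≠ 0 := by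
  by_contra hc
  push_neg at hc
  exact h (by funext i; fin_cases i <;> simp [hc.1, hc.2])

lemma vec_eq_zero {u : E2} (h0 : u 0 = 0) (h1 : u 1 = 0) : u = 0 := by
  funext i; fin_cases i <;> simp [h0, h1]

lemma clm_apply_expand (T : E2 →L[ℂ] ℂ) (z : E2) :
    T z = z 0 * T ![1,0] + z 1 * T ![0,1] := by
  conv_lhs => rw [vec_expand z]
  rw [map_add, map_smul, map_smul, smul_eq_mul, smul_eq_mul]

lemma clm_eq_zero {T : E2 →L[ℂ] ℂ} (h0 : T ![1,0] = 0) (h1 : T ![0,1] = 0) : T = 0 := by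
  ext1 z; rw [clm_apply_expand, h0, h1]; simp

/-- kernel elements of a nonzero functional are multiples of `![a1, -a0]`. -/
lemma ker_form {T : E2 →L[ℂ] ℂ} (hT : T ≠ 0) {v : E2} (hv : T v = 0) (hv0 : v ≠ 0) :
    ∃ c : ℂ, c ≠ 0 ∧ v = c • ![T ![0,1], -(T ![1,0])] := by
  rw [clm_apply_expand] at hv
  have hT' : T ![1,0] ≠ 0 ∨ T ![0,1] ≠ 0 := by
    by_contra hc
    push_neg at hc
    exact hT (clm_eq_zero hc.1 hc.2)
  revert hv hT'
  generalize T ![1,0] = a0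
  generalize T ![0,1] = a1
  intro hv hT'
  by_cases h : a0 ≠ 0
  · refine ⟨-(v 1) / a0, ?_, ?_⟩
    · intro hc
      have hv1 : v 1 = 0 := by field_simp at hc; simpa using hc
      have hv0' : v 0 = 0 := by
        have h2 : v 0 * a0 = 0 := by rw [← hv, hv1]; ring
        exact (mul_eq_zero.1 h2).resolve_right h
      exact hv0 (vec_eq_zero hv0' hv1)
    · funext i
      fin_cases i
      · show v 0 = -(v 1) / a0 * a1
        field_simp
        linear_combination hv
      · show v 1 = -(v 1) / a0 * (-a0)
        field_simp
  · push_neg at h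
    have ha1ne : a1 ≠ 0 := hT'.resolve_left (by simpa using h)
    have hv1 : v 1 = 0 := by
      have h2 : v 1 * a1 = 0 := by rw [← hv, h]; ring
      exact (mul_eq_zero.1 h2).resolve_right ha1ne
    have hv0' : v 0 ≠ 0 := fun h0 => hv0 (vec_eq_zero h0 hv1)
    refine ⟨v 0 / a1, div_ne_zero hv0' ha1ne, ?_⟩
    funext i
    fin_cases i
    · show v 0 = v 0 / a1 * a1
      field_simp
    · show v 1 = v 0 / a1 * (-a0)
      rw [h, hv1]; ring

lemma ker_compare {T : E2 →L[ℂ] ℂ} (hT : T ≠ 0) {u v : E2} (hu : T u = 0) (hv : T v = 0)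
    (hu0 : u ≠ 0) (hv0 : v ≠ 0) : ∃ μ : ℂ, μ ≠ 0 ∧ v = μ • u := by
  obtain ⟨c, hc, hcu⟩ := ker_form hT hu hu0
  obtain ⟨c', hc', hcv⟩ := ker_form hT hv hv0
  exact ⟨c' / c, div_ne_zero hc' hc, by rw [hcu, hcv, smul_smul, div_mul_cancel₀ _ hc]⟩

lemma exists_ker (T : E2 →L[ℂ] ℂ) (hT : T ≠ 0) : ∃ u : E2, u ≠ 0 ∧ T u = 0 := by
  refine ⟨![T ![0,1], -(T ![1,0])], ?_, ?_⟩
  · intro h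
    have h0 : T ![0,1] = 0 := by simpa using congrFun h 0
    have h1 : T ![1,0] = 0 := by simpa [neg_eq_zero] using congrFun h 1
    exact hT (clm_eq_zero h1 h0)
  · rw [clm_apply_expand]; simp; ring

def det2 (u v : E2) : ℂ := u 0 * v 1 - u 1 * v 0

lemma det2_smul_smul (a b : ℂ) (u v : E2) : det2 (a • u) (b • v) = a * b * det2 u v := by
  simp [det2, smul_eq_mul]; ring

lemma parallel_of_det2_zero {u v : E2} (h : det2 u v = 0) (hu : u ≠ 0) (hv : v ≠ 0) :
    ∃ μ : ℂ, μ ≠ 0 ∧ v = μ • u := by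
  unfold det2 at h
  rcases vec_ne_zero hu with h0 | h1
  · refine ⟨v 0 / u 0, ?_, ?_⟩
    · intro hc
      have hv0 : v 0 = 0 := by field_simp at hc; simpa using hc
      have hv1 : v 1 = 0 := by
        have h2 : v 1 * u 0 = 0 := by linear_combination h + hv0 * u 1
        exact (mul_eq_zero.1 h2).resolve_right h0
      exact hv (vec_eq_zero hv0 hv1)
    · funext i
      fin_cases i
      · show v 0 = v 0 / u 0 * u 0
        field_simp
      · show v 1 = v 0 / u 0 * u 1
        field_simp
        linear_combination h
  · refine ⟨v 1 / u 1, ?_, ?_⟩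
    · intro hc
      have hv1 : v 1 = 0 := by field_simp at hc; simpa using hc
      have hv0 : v 0 = 0 := by
        have h2 : v 0 * u 1 = 0 := by linear_combination -h + hv1 * u 0
        exact (mul_eq_zero.1 h2).resolve_right h1
      exact hv (vec_eq_zero hv0 hv1)
    · funext i
      fin_cases i
      · show v 0 = v 1 / u 1 * u 0
        field_simp
        linear_combination -h
      · show v 1 = v 1 / u 1 * u 1
        field_simp

lemma dep_funct {A B : E2 →L[ℂ] ℂ} {u : E2} (hu : u ≠ 0) (hA : A u = 0) (hB : B u = 0) :
    ¬ LinearIndependent ℂ ![A, B] := by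
  intro hind
  have hA0 : A ≠ 0 := by simpa using hind.ne_zero 0
  have hB0 : B ≠ 0 := by simpa using hind.ne_zero 1
  obtain ⟨c, hc, hcu⟩ := ker_form hA0 hA hu
  obtain ⟨c', hc', hcv⟩ := ker_form hB0 hB hu
  -- comparing: c • ![A01, -A10] = c' • ![B01, -B10]
  have h01 : B ![0,1] = (c / c') * A ![0,1] := by
    have := congrFun (hcu.symm.trans hcv) 0
    simp [smul_eq_mul] at this
    field_simp
    linear_combination -this
  have h10 : B ![1,0] = (c / c') * A ![1,0] := by
    have := congrFun (hcu.symm.trans hcv) 1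
    simp [smul_eq_mul] at this
    field_simp
    linear_combination -this
  have hBA : B = (c / c') • A := by
    ext1 z
    have e1 := clm_apply_expand A z
    have e2 := clm_apply_expand B z
    simp only [ContinuousLinearMap.smul_apply, smul_eq_mul]
    rw [e2, e1, h01, h10]; ring
  have := (LinearIndependent.pair_iff.1 hind) (c / c') (-1)
    (by rw [hBA]; simp)
  exact absurd this.2 (by norm_num)

lemma indep_funct {A B : E2 →L[ℂ] ℂ} {u v : E2} (hA : A u = 0) (hB : B v = 0)
    (hA0 : A ≠ 0) (hB0 : B ≠ 0) (hu : u ≠ 0) (hv : v ≠ 0) (hd : det2 u v ≠ 0) :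
    LinearIndependent ℂ ![A, B] := by
  rw [LinearIndependent.pair_iff]
  intro s t hst
  have hBu : B u ≠ 0 := by
    intro hBu
    obtain ⟨μ, hμ, hμv⟩ := ker_compare hB0 hBu hB hu hv
    apply hd
    rw [hμv]
    simp only [det2, Pi.smul_apply, smul_eq_mul]; ring
  have ht : t = 0 := by
    have h1 : (s • A + t • B) u = 0 := by rw [hst]; simp
    simp only [ContinuousLinearMap.add_apply, ContinuousLinearMap.smul_apply, smul_eq_mul,
      hA, mul_zero, zero_add] at h1
    exact (mul_eq_zero.1 h1).resolve_right hBu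
  have hz : ∃ z, A z ≠ 0 := by
    by_contra hc
    push_neg at hc
    exact hA0 (ContinuousLinearMap.ext fun z => by simpa using hc z)
  obtain ⟨z, hz⟩ := hz
  have hs : s = 0 := by
    have h1 : (s • A + t • B) z = 0 := by rw [hst]; simp
    simp only [ht, ContinuousLinearMap.add_apply, ContinuousLinearMap.smul_apply, smul_eq_mul,
      zero_mul, add_zero] at h1
    exact (mul_eq_zero.1 h1).resolve_right hz
  exact ⟨hs, ht⟩

lemma fin2_eq_or {j k : Fin 2} (h : j ≠ k) (i : Fin 2) : i = j ∨ i = k := by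
  fin_cases j <;> fin_cases k <;> fin_cases i <;> simp_all

lemma vec_eq_zero_jk {j k : Fin 2} (h : j ≠ k) {u : E2} (hj : u j = 0) (hk : u k = 0) :
    u = 0 := by
  funext i
  rcases fin2_eq_or h i with rfl | rfl
  · exact hj
  · exact hk

lemma vec_expand_jk {j k : Fin 2} (h : j ≠ k) (z : E2) :
    z = z j • (Pi.single j 1 : Fin 2 → ℂ) + z k • (Pi.single k 1 : Fin 2 → ℂ) := by
  funext i
  rcases fin2_eq_or h i with rfl | rfl
  · simp [Pi.single_eq_same, Pi.single_eq_of_ne h]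
  · simp [Pi.single_eq_same, Pi.single_eq_of_ne h.symm]

lemma clm_apply_jk {j k : Fin 2} (h : j ≠ k) (T : E2 →L[ℂ] ℂ) (z : E2) :
    T z = z j * T (Pi.single j 1) + z k * T (Pi.single k 1) := by
  conv_lhs => rw [vec_expand_jk h z]
  rw [map_add, map_smul, map_smul, smul_eq_mul, smul_eq_mul]

lemma exists_basis_ne {A : E2 →L[ℂ] ℂ} (hA : A ≠ 0) :
    ∃ k : Fin 2, A (Pi.single k 1) ≠ 0 := by
  by_contra hc
  push_neg at hc
  refine hA (ContinuousLinearMap.ext fun z => ?_)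
  rw [clm_apply_jk (show (0:Fin 2) ≠ 1 by decide), hc, hc]
  simp

/-- Through a smooth point of the zero set of an analytic function there is an
analytic curve locally parametrizing the zero set. -/
lemma curve_of_zero_set {α : E2 → ℂ} {p : E2} {A : E2 →L[ℂ] ℂ}
    (hα : AnalyticAt ℂ α p) (hα0 : α p = 0) (hdα : HasFDerivAt α A p) (hA : A ≠ 0) :
    ∃ γ : ℂ → E2, ∃ v₀ : E2, AnalyticAt ℂ γ 0 ∧ γ 0 = p ∧ HasDerivAt γ v₀ 0 ∧ v₀ ≠ 0 ∧
      A v₀ = 0 ∧ (∀ᶠ t in 𝓝 (0:ℂ), α (γ t) = 0) ∧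
      (∀ s ∈ 𝓝 (0:ℂ), ∀ᶠ x in 𝓝 p, α x = 0 → ∃ t ∈ s, γ t = x) := by
  obtain ⟨k, hk⟩ := exists_basis_ne hA
  obtain ⟨j, hjk⟩ : ∃ j : Fin 2, j ≠ k := ⟨if k = 0 then 1 else 0, by fin_cases k <;> decide⟩
  -- the straightening map G
  set G : E2 → E2 := fun z => ![z j - p j, α z] with hG
  have hGapp0 : ∀ z, G z 0 = z j - p j := fun z => rfl
  have hGapp1 : ∀ z, G z 1 = α z := fun z => rfl
  set T : E2 →L[ℂ] E2 :=
    ContinuousLinearMap.pi ![(ContinuousLinearMap.proj j : E2 →L[ℂ] ℂ), A] with hT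
  have hTapp : ∀ z, T z = ![z j, A z] := by
    intro z; funext i; fin_cases i <;> simp [hT, ContinuousLinearMap.pi_apply]
  have hTzero : ∀ z, T z = 0 → z = 0 := by
    intro z hz
    have h0 : z j = 0 := by
      have := congrFun hz 0; rw [hTapp] at this; simpa using this
    have h1 : A z = 0 := by
      have := congrFun hz 1; rw [hTapp] at this; simpa using this
    rw [clm_apply_jk hjk, h0] at h1
    simp only [zero_mul, zero_add] at h1
    have hzk : z k = 0 := by
      rcases mul_eq_zero.1 h1 with h | h
      · exact h
      · exact absurd h hk
    exact vec_eq_zero_jk hjk h0 hzk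
  have hinj : Function.Injective T := by
    intro z1 z2 hz
    have : T (z1 - z2) = 0 := by rw [map_sub, hz, sub_self]
    have := hTzero _ this
    exact sub_eq_zero.1 this
  have hsurj : Function.Surjective (T : E2 →ₗ[ℂ] E2) :=
    LinearMap.injective_iff_surjective.1 hinj
  let eL : E2 ≃ₗ[ℂ] E2 := LinearEquiv.ofBijective (T : E2 →ₗ[ℂ] E2) ⟨hinj, hsurj⟩
  let e : E2 ≃L[ℂ] E2 := eL.toContinuousLinearEquiv
  have hecoe : (e : E2 →L[ℂ] E2) = T := by ext1 v; rfl
  -- G is analytic with derivative T at p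
  have hGanal : AnalyticAt ℂ G p := by
    rw [hG]
    apply AnalyticAt.pi
    intro i
    fin_cases i
    · exact (((ContinuousLinearMap.proj j : E2 →L[ℂ] ℂ).analyticAt p).sub analyticAt_const)
    · exact hα
  have hGd : HasFDerivAt G (e : E2 →L[ℂ] E2) p := by
    rw [hecoe, hG, hT]
    apply hasFDerivAt_pi''
    intro i
    fin_cases i
    · simpa using ((ContinuousLinearMap.proj j : E2 →L[ℂ] ℂ).hasFDerivAt.sub_const (p j))
    · simpa using hdα
  obtain ⟨Gi, hGi_an, hGi_pt, hGi_left, hGi_right, hGi_d⟩ :=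
    analytic_local_inverse hGanal e hGd
  -- the parametrization
  set ι : ℂ → E2 := fun t => ![t, 0] with hι
  have hι_lin : ι = fun t => t • (![1, 0] : E2) := by
    funext t i; fin_cases i <;> simp [hι]
  have hι0 : ι 0 = G p := by
    funext i; fin_cases i <;> simp [hι, hG, hα0]
  set γ : ℂ → E2 := fun t => Gi (ι t) with hγ
  set v₀ : E2 := e.symm ![1, 0] with hv₀
  have hιd : HasDerivAt ι (![1, 0] : E2) 0 := by
    rw [hι_lin]
    simpa using (hasDerivAt_id (0:ℂ)).smul_const (![1, 0] : E2)
  have hιc : ContinuousAt ι 0 := hιd.continuousAt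
  refine ⟨γ, v₀, ?_, ?_, ?_, ?_, ?_, ?_, ?_⟩
  · -- analytic
    have : AnalyticAt ℂ Gi (ι 0) := by rwa [hι0]
    have hιa : AnalyticAt ℂ ι 0 := by
      rw [hι_lin]
      exact (analyticAt_id.smul analyticAt_const)
    exact this.comp hιa
  · -- γ 0 = p
    rw [hγ]; simp only; rw [hι0, hGi_pt]
  · -- derivative
    have hGid : HasFDerivAt Gi (e.symm : E2 →L[ℂ] E2) (ι 0) := by rwa [hι0]
    have := hGid.comp_hasDerivAt 0 hιd
    simpa [hγ, hv₀, Function.comp_def] using this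
  · -- v₀ ≠ 0
    intro h
    have h2 : (![1, 0] : E2) = 0 := by
      have h3 := congrArg (⇑e) h
      rwa [hv₀, ContinuousLinearEquiv.apply_symm_apply, map_zero] at h3
    simpa using congrFun h2 0
  · -- A v₀ = 0
    have hTv : T v₀ = ![1, 0] := by
      rw [← hecoe, hv₀]
      exact e.apply_symm_apply _
    have := congrFun hTv 1
    rw [hTapp] at this
    simpa using this
  · -- α (γ t) = 0 eventually
    have h1 : ∀ᶠ t in 𝓝 (0:ℂ), G (Gi (ι t)) = ι t := by
      have := hιc.preimage_mem_nhds (by rw [hι0]; exact hGi_right)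
      filter_upwards [this] with t ht using ht
    filter_upwards [h1] with t ht
    have := congrFun ht 1
    rw [hGapp1] at this
    rw [hγ]
    simp only
    rw [this, hι]
    simp
  · -- completeness
    intro s hs
    have hcont : ContinuousAt (fun x : E2 => x j - p j) p :=
      ((continuous_apply j).continuousAt).sub continuousAt_const
    have h2 : ∀ᶠ x in 𝓝 p, x j - p j ∈ s := by
      have : (fun x : E2 => x j - p j) p = 0 := by simp
      exact hcont (by rwa [this])
    filter_upwards [hGi_left, h2] with x hx hxs hαx
    refine ⟨x j - p j, hxs, ?_⟩
    have hGx : ι (x j - p j) = G x := by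
      funext i; fin_cases i <;> simp [hι, hG, hαx]
    rw [hγ]
    simp only
    rw [hGx, hx]

lemma vec_eq_of_jkP : ∀ {j k : Fin 2}, j ≠ k → ∀ {u v : Fin 2 → ℂ}, u j = v j → u k = v k → u = v := by
  intro j k h u v hj hk
  funext i
  rcases fin2_eq_or h i with h' | h' <;> rw [h'] <;> assumption

lemma det2_def (u v : Fin 2 → ℂ) : det2 u v = u 0 * v 1 - u 1 * v 0 := rfl

/-- Local defining function for the image of an analytic curve with nonvanishing derivative. -/
lemma defining_function {c : ℂ → E2} {p : E2} {w : E2}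
    (hc : AnalyticAt ℂ c 0) (hc0 : c 0 = p) (hcd : HasDerivAt c w 0) (hw : w ≠ 0) :
    ∃ φ : E2 → ℂ, ∃ D : E2 →L[ℂ] ℂ, AnalyticAt ℂ φ p ∧ φ p = 0 ∧ HasFDerivAt φ D p ∧
      D ≠ 0 ∧ D w = 0 ∧
      (∀ᶠ t in 𝓝 (0:ℂ), φ (c t) = 0) ∧
      (∀ s ∈ 𝓝 (0:ℂ), ∀ᶠ z in 𝓝 p, (φ z = 0 → ∃ t ∈ s, c t = z)) := by
  obtain ⟨k, hwk⟩ : ∃ k : Fin 2, w k ≠ 0 := by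
    rcases vec_ne_zero hw with h | h
    exacts [⟨0, h⟩, ⟨1, h⟩]
  obtain ⟨j, hjk⟩ : ∃ j : Fin 2, j ≠ k := ⟨if k = 0 then 1 else 0, by fin_cases k <;> decide⟩
  set h : ℂ → ℂ := fun t => c t k - p k with hh
  have hh_an : AnalyticAt ℂ h 0 := by
    have h1 : AnalyticAt ℂ (fun t => c t k) 0 :=
      ((ContinuousLinearMap.proj k : E2 →L[ℂ] ℂ).analyticAt (c 0)).comp hc
    exact h1.sub analyticAt_const
  have hh0 : h 0 = 0 := by simp [hh, hc0]
  have hhd : HasDerivAt h (w k) 0 := by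
    have h1 : HasDerivAt (fun t => c t k) (w k) 0 := by
      have := (ContinuousLinearMap.proj k : E2 →L[ℂ] ℂ).hasFDerivAt.comp_hasDerivAt 0 hcd
      simpa [Function.comp_def] using this
    simpa [hh] using h1.sub_const (p k)
  set e : ℂ ≃L[ℂ] ℂ := ContinuousLinearEquiv.unitsEquivAut ℂ (Units.mk0 (w k) hwk) with he
  have hecoe : (e : ℂ →L[ℂ] ℂ) = ContinuousLinearMap.smulRight (1 : ℂ →L[ℂ] ℂ) (w k) := by
    ext1
    simp [he, ContinuousLinearEquiv.unitsEquivAut_apply]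
  have hhd' : HasFDerivAt h (e : ℂ →L[ℂ] ℂ) 0 := by
    rw [hecoe]; exact hhd
  obtain ⟨hi, hi_an, hi_pt, hi_left, hi_right, hi_d⟩ := analytic_local_inverse hh_an e hhd'
  rw [hh0] at hi_an hi_pt hi_right hi_d
  have hi_symm : (e.symm : ℂ →L[ℂ] ℂ) =
      ContinuousLinearMap.smulRight (1 : ℂ →L[ℂ] ℂ) (w k)⁻¹ := by
    ext1
    simp [he, ContinuousLinearEquiv.unitsEquivAut_apply_symm]
  have hi_d' : HasDerivAt hi (w k)⁻¹ 0 := by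
    rw [hi_symm] at hi_d
    exact hi_d
  set φ : E2 → ℂ := fun z => z j - c (hi (z k - p k)) j with hφ
  have hval : hi (p k - p k) = 0 := by rw [sub_self, hi_pt]
  have hφp : φ p = 0 := by
    simp only [hφ, hval, hc0]
    ring
  -- derivative
  set L : E2 →L[ℂ] ℂ := (w k)⁻¹ • (ContinuousLinearMap.proj k : E2 →L[ℂ] ℂ) with hL
  have hinner : HasFDerivAt (fun z : E2 => hi (z k - p k)) L p := by
    have h1 : HasFDerivAt (fun z : E2 => z k - p k)
        (ContinuousLinearMap.proj k : E2 →L[ℂ] ℂ) p :=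
      (ContinuousLinearMap.proj k : E2 →L[ℂ] ℂ).hasFDerivAt.sub_const (p k)
    have h2 := HasDerivAt.comp_hasFDerivAt_of_eq p hi_d' h1 (by simp)
    simpa [hL, Function.comp_def] using h2
  have hcd2 : HasDerivAt c w ((fun z : E2 => hi (z k - p k)) p) := by
    simp only [hval]; exact hcd
  have houter : HasFDerivAt (fun z : E2 => c (hi (z k - p k)))
      ((ContinuousLinearMap.smulRight (1 : ℂ →L[ℂ] ℂ) w).comp L) p := by
    have h2 := hcd2.hasFDerivAt.comp p hinner
    simpa [Function.comp_def, ContinuousLinearMap.smulRight_one_eq_toSpanSingleton] using h2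
  set D : E2 →L[ℂ] ℂ := (ContinuousLinearMap.proj j : E2 →L[ℂ] ℂ) -
      (ContinuousLinearMap.proj j : E2 →L[ℂ] ℂ).comp
        ((ContinuousLinearMap.smulRight (1 : ℂ →L[ℂ] ℂ) w).comp L) with hD
  have hDapp : ∀ v, D v = v j - (w k)⁻¹ * v k * w j := by
    intro v
    simp only [hD, hL, ContinuousLinearMap.sub_apply, ContinuousLinearMap.comp_apply,
      ContinuousLinearMap.smulRight_apply, ContinuousLinearMap.one_apply,
      ContinuousLinearMap.smul_apply, ContinuousLinearMap.proj_apply, smul_eq_mul,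
      Pi.smul_apply]
  have hφd : HasFDerivAt φ D p := by
    have h1 : HasFDerivAt (fun z : E2 => z j)
        (ContinuousLinearMap.proj j : E2 →L[ℂ] ℂ) p :=
      (ContinuousLinearMap.proj j : E2 →L[ℂ] ℂ).hasFDerivAt
    have h3 := ((ContinuousLinearMap.proj j : E2 →L[ℂ] ℂ).hasFDerivAt.comp p houter)
    have h4 : HasFDerivAt (fun z : E2 => c (hi (z k - p k)) j)
        ((ContinuousLinearMap.proj j : E2 →L[ℂ] ℂ).comp
          ((ContinuousLinearMap.smulRight (1 : ℂ →L[ℂ] ℂ) w).comp L)) p := by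
      simpa [Function.comp_def] using h3
    exact h1.sub h4
  have hDne : D ≠ 0 := by
    intro hc0'
    have h1 : D (Pi.single j 1) = 0 := by rw [hc0']; rfl
    rw [hDapp] at h1
    rw [Pi.single_eq_same, Pi.single_eq_of_ne hjk.symm] at h1
    simp at h1
  have hDw : D w = 0 := by
    rw [hDapp]
    field_simp
    simp
  -- analyticity of φ
  have hu : AnalyticAt ℂ (fun z : E2 => z k - p k) p :=
    ((ContinuousLinearMap.proj k : E2 →L[ℂ] ℂ).analyticAt p).sub analyticAt_const
  have h2an : AnalyticAt ℂ (fun z : E2 => hi (z k - p k)) p := by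
    apply AnalyticAt.comp (g := hi) (f := fun z : E2 => z k - p k) ?_ hu
    simpa using hi_an
  have h3an : AnalyticAt ℂ (fun z : E2 => c (hi (z k - p k))) p := by
    apply AnalyticAt.comp (g := c) (f := fun z : E2 => hi (z k - p k)) ?_ h2an
    show AnalyticAt ℂ c (hi (p k - p k))
    rw [hval]; exact hc
  have h4an : AnalyticAt ℂ (fun z : E2 => c (hi (z k - p k)) j) p := by
    apply AnalyticAt.comp (g := fun v : E2 => v j) (f := fun z : E2 => c (hi (z k - p k))) ?_ h3an
    exact (ContinuousLinearMap.proj j : E2 →L[ℂ] ℂ).analyticAt _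
  have hφ_an : AnalyticAt ℂ φ p :=
    (((ContinuousLinearMap.proj j : E2 →L[ℂ] ℂ).analyticAt p).sub h4an)
  refine ⟨φ, D, hφ_an, hφp, hφd, hDne, hDw, ?_, ?_⟩
  · -- φ vanishes on the curve
    filter_upwards [hi_left] with t ht
    simp only [hφ]
    rw [show c t k - p k = h t from rfl, ht, sub_self]
  · -- points where φ vanishes lie on the curve
    intro s hs
    have hu_cont : ContinuousAt (fun z : E2 => z k - p k) p :=
      ((continuous_apply k).continuousAt).sub continuousAt_const
    have hu_t : Tendsto (fun z : E2 => z k - p k) (𝓝 p) (𝓝 0) := by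
      simpa using hu_cont.tendsto
    have hcont1 : ContinuousAt (fun z : E2 => hi (z k - p k)) p := by
      apply ContinuousAt.comp (g := hi) (f := fun z : E2 => z k - p k) ?_ hu_cont
      simpa using hi_d.continuousAt
    have ev1 : ∀ᶠ z in 𝓝 p, hi (z k - p k) ∈ s :=
      hcont1.eventually_mem (by simpa [hi_pt] using hs)
    have ev2 : ∀ᶠ z in 𝓝 p, h (hi (z k - p k)) = z k - p k := hu_t.eventually hi_right
    filter_upwards [ev1, ev2] with z h1 h2 hφz
    refine ⟨hi (z k - p k), h1, vec_eq_of_jkP hjk ?_ ?_⟩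
    · have h5 : z j - c (hi (z k - p k)) j = 0 := hφz
      exact (sub_eq_zero.1 h5).symm
    · have h3 : c (hi (z k - p k)) k - p k = z k - p k := h2
      exact sub_left_inj.1 h3

lemma analyticAt_eval (f : MvPolynomial (Fin 2) ℂ) (z : E2) :
    AnalyticAt ℂ (fun z : E2 => eval z f) z := by
  induction f using MvPolynomial.induction_on with
  | C a => simp only [eval_C]; exact analyticAt_const
  | add p q hp hq => simp only [map_add]; exact hp.add hq
  | mul_X p n hp =>
    simp only [map_mul, eval_X]
    exact hp.mul ((ContinuousLinearMap.proj n : E2 →L[ℂ] ℂ).analyticAt z)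

def polyDeriv (f : MvPolynomial (Fin 2) ℂ) (z : E2) : E2 →L[ℂ] ℂ :=
  ∑ i, eval z (pderiv i f) • (ContinuousLinearMap.proj i : E2 →L[ℂ] ℂ)

lemma polyDeriv_apply (f : MvPolynomial (Fin 2) ℂ) (z v : E2) :
    polyDeriv f z v = ∑ i, eval z (pderiv i f) * v i := by
  simp [polyDeriv, ContinuousLinearMap.sum_apply, smul_eq_mul]

lemma hasFDerivAt_eval (f : MvPolynomial (Fin 2) ℂ) (z : E2) :
    HasFDerivAt (fun z : E2 => eval z f) (polyDeriv f z) z := by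
  induction f using MvPolynomial.induction_on with
  | C a =>
    simp only [eval_C]
    have h : polyDeriv (C a : MvPolynomial (Fin 2) ℂ) z = 0 := by
      simp only [polyDeriv, pderiv_C, map_zero, Fin.sum_univ_two]
      module
    rw [h]
    exact hasFDerivAt_const a z
  | add p q hp hq =>
    simp only [map_add]
    have h : polyDeriv (p + q) z = polyDeriv p z + polyDeriv q z := by
      simp only [polyDeriv, map_add, add_smul, Fin.sum_univ_two]
      module
    rw [h]
    exact hp.add hq
  | mul_X p n hp =>
    simp only [map_mul, eval_X]
    have hX : HasFDerivAt (fun z : E2 => z n) (ContinuousLinearMap.proj n : E2 →L[ℂ] ℂ) z :=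
      (ContinuousLinearMap.proj n : E2 →L[ℂ] ℂ).hasFDerivAt
    have h := hp.mul' hX
    have heq : polyDeriv (p * X n) z =
        eval z p • (ContinuousLinearMap.proj n : E2 →L[ℂ] ℂ) + (polyDeriv p z).smulRight (z n) := by
      ext1 v
      rw [ContinuousLinearMap.add_apply, ContinuousLinearMap.smul_apply,
        ContinuousLinearMap.smulRight_apply, polyDeriv_apply, polyDeriv_apply]
      simp only [pderiv_mul, map_add, map_mul, eval_X, ContinuousLinearMap.proj_apply,
        smul_eq_mul, pderiv_X]
      rw [Fin.sum_univ_two, Fin.sum_univ_two]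
      fin_cases n <;> simp [Pi.single_apply] <;> ring
    rw [heq]
    exact h

section Fmap
variable {f g : MvPolynomial (Fin 2) ℂ} {F : E2 → E2}

def Fd (f g : MvPolynomial (Fin 2) ℂ) (z : E2) : E2 →L[ℂ] E2 :=
  ContinuousLinearMap.pi ![polyDeriv f z, polyDeriv g z]

lemma Fd_apply (f g : MvPolynomial (Fin 2) ℂ) (z v : E2) :
    Fd f g z v = ![polyDeriv f z v, polyDeriv g z v] := by
  funext i
  fin_cases i <;> simp [Fd, ContinuousLinearMap.pi_apply]

lemma analyticAt_F (hF : ∀ q, F q = ![eval q f, eval q g]) (z : E2) :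
    AnalyticAt ℂ F z := by
  have hFe : F = fun z => ![eval z f, eval z g] := funext hF
  rw [hFe]
  apply AnalyticAt.pi
  intro i
  fin_cases i
  · exact analyticAt_eval f z
  · exact analyticAt_eval g z

lemma hasFDerivAt_F (hF : ∀ q, F q = ![eval q f, eval q g]) (z : E2) :
    HasFDerivAt F (Fd f g z) z := by
  have hFe : F = fun z => ![eval z f, eval z g] := funext hF
  rw [hFe]
  apply hasFDerivAt_pi''
  intro i
  fin_cases i
  · simpa [Fd] using hasFDerivAt_eval f z
  · simpa [Fd] using hasFDerivAt_eval g z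

end Fmap

/-- If the zero set of `α` is eventually contained in `{β1 = 0} ∪ {β2 = 0}`, then the
derivative of `β1` or of `β2` kills the tangent direction of `{α = 0}`. -/
lemma zset {α β1 β2 : E2 → ℂ} {p : E2} {A : E2 →L[ℂ] ℂ}
    (hα : AnalyticAt ℂ α p) (hα0 : α p = 0) (hdα : HasFDerivAt α A p) (hA : A ≠ 0)
    (hβ1 : AnalyticAt ℂ β1 p) (hβ10 : β1 p = 0) (hβ2 : AnalyticAt ℂ β2 p) (hβ20 : β2 p = 0)
    (hev : ∀ᶠ z in 𝓝 p, α z = 0 → (β1 z = 0 ∨ β2 z = 0))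
    {u : E2} (hu : u ≠ 0) (hAu : A u = 0) :
    fderiv ℂ β1 p u = 0 ∨ fderiv ℂ β2 p u = 0 := by
  obtain ⟨γ, v₀, hγa, hγ0, hγd, hv₀, hAv₀, hγz, -⟩ := curve_of_zero_set hα hα0 hdα hA
  obtain ⟨μ, hμ, hμu⟩ := ker_compare hA hAv₀ hAu hv₀ hu
  have hb1 : AnalyticAt ℂ (fun t => β1 (γ t)) 0 := by
    apply AnalyticAt.comp (g := β1) (f := γ) ?_ hγa
    rw [hγ0]; exact hβ1
  have hγc : Tendsto γ (𝓝 0) (𝓝 p) := by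
    have := hγd.continuousAt.tendsto
    rwa [hγ0] at this
  have hev' : ∀ᶠ t in 𝓝 (0:ℂ), β1 (γ t) = 0 ∨ β2 (γ t) = 0 := by
    filter_upwards [hγc.eventually hev, hγz] with t h1 h3 using h1 h3
  have key : (∀ᶠ t in 𝓝 (0:ℂ), β1 (γ t) = 0) ∨ (∀ᶠ t in 𝓝 (0:ℂ), β2 (γ t) = 0) := by
    rcases hb1.eventually_eq_zero_or_eventually_ne_zero with h | h
    · left; exact h
    · right
      have h2 : ∀ᶠ t in 𝓝[≠] (0:ℂ), β2 (γ t) = 0 := by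
        filter_upwards [h, hev'.filter_mono nhdsWithin_le_nhds] with t h1 h3
        exact h3.resolve_left h1
      rw [eventually_nhdsWithin_iff] at h2
      filter_upwards [h2] with t ht
      by_cases h0 : t = 0
      · rw [h0, hγ0]; exact hβ20
      · exact ht h0
  have derivzero : ∀ (β : E2 → ℂ), AnalyticAt ℂ β p → (∀ᶠ t in 𝓝 (0:ℂ), β (γ t) = 0) →
      fderiv ℂ β p u = 0 := by
    intro β hβ hβz
    have hβd : HasFDerivAt β (fderiv ℂ β p) (γ 0) := by
      rw [hγ0]; exact hβ.differentiableAt.hasFDerivAt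
    have hd1 : HasDerivAt (fun t => β (γ t)) (fderiv ℂ β p v₀) 0 := hβd.comp_hasDerivAt 0 hγd
    have hz : HasDerivAt (fun _ : ℂ => (0:ℂ)) (fderiv ℂ β p v₀) 0 :=
      hd1.congr_of_eventuallyEq (hβz.mono fun t ht => ht.symm)
    have h0 : fderiv ℂ β p v₀ = 0 := hz.unique (hasDerivAt_const 0 0)
    rw [hμu, map_smul, h0, smul_zero]
  rcases key with h | h
  · exact Or.inl (derivzero β1 hβ1 h)
  · exact Or.inr (derivzero β2 hβ2 h)

/-- Properness localizes the preimage of points near `p`. -/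
lemma proper_localization {F : E2 → E2} (hproper : IsProperMap F) {J : MvPolynomial (Fin 2) ℂ}
    {p q1 q2 : E2} (hfib : F ⁻¹' {p} ∩ {q | eval q J = 0} = {q1, q2})
    {U1 U2 : Set E2} (hU1 : U1 ∈ 𝓝 q1) (hU2 : U2 ∈ 𝓝 q2) :
    ∀ᶠ z in 𝓝 p, ∀ x, eval x J = 0 → F x = z → x ∈ U1 ∪ U2 := by
  by_contra hc
  rw [Filter.not_eventually] at hc
  have hseq : ∀ n : ℕ, ∃ x : E2, eval x J = 0 ∧
      F x ∈ Metric.ball p (1/(n+1)) ∧ x ∉ U1 ∪ U2 := by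
    intro n
    have hb : Metric.ball p (1/(n+1)) ∈ 𝓝 p := Metric.ball_mem_nhds _ (by positivity)
    obtain ⟨z, hz, hzb⟩ := (hc.and_eventually hb).exists
    push_neg at hz
    obtain ⟨x, hx1, hx2, hx3⟩ := hz
    exact ⟨x, hx1, hx2 ▸ hzb, hx3⟩
  choose x hxJ hxB hxU using hseq
  have hdist : ∀ n : ℕ, dist (F (x n)) p ≤ 1/(n+1) := fun n => le_of_lt (hxB n)
  have hFx : Tendsto (fun n => F (x n)) atTop (𝓝 p) := by
    rw [tendsto_iff_dist_tendsto_zero]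
    exact squeeze_zero (fun n => dist_nonneg) hdist tendsto_one_div_add_atTop_nhds_zero_nat
  have hxK : ∀ n, x n ∈ F ⁻¹' Metric.closedBall p 1 := by
    intro n
    simp only [Set.mem_preimage, Metric.mem_closedBall]
    calc dist (F (x n)) p ≤ 1/(n+1) := hdist n
    _ ≤ 1 := by rw [div_le_one (by positivity)]; linarith [Nat.cast_nonneg (α := ℝ) n]
  have hK : IsCompact (F ⁻¹' Metric.closedBall p 1) :=
    hproper.isCompact_preimage (isCompact_closedBall p 1)
  obtain ⟨a, haK, φs, hφmono, hφtend⟩ := hK.tendsto_subseq hxK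
  have haC : eval a J = 0 := by
    have hcont : ContinuousAt (fun z : E2 => eval z J) a := (analyticAt_eval J a).continuousAt
    have h1 := hcont.tendsto.comp hφtend
    have h1' : Tendsto (fun n => eval (x (φs n)) J) atTop (𝓝 (eval a J)) := by
      simpa [Function.comp_def] using h1
    have h2 : (fun n => eval (x (φs n)) J) = fun _ => (0:ℂ) := by
      funext n; exact hxJ (φs n)
    rw [h2] at h1'
    exact tendsto_nhds_unique h1' tendsto_const_nhds
  have haF : F a = p :=
    tendsto_nhds_unique ((hproper.continuous.continuousAt.tendsto).comp hφtend)
      (hFx.comp hφmono.tendsto_atTop)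
  have haq : a ∈ ({q1, q2} : Set E2) := by
    rw [← hfib]
    exact ⟨by simp [haF], haC⟩
  have haU : U1 ∪ U2 ∈ 𝓝 a := by
    rcases haq with rfl | rfl
    · exact mem_of_superset hU1 Set.subset_union_left
    · exact mem_of_superset hU2 Set.subset_union_right
  have haU' : ∀ᶠ y in 𝓝 a, y ∈ U1 ∪ U2 := haU
  obtain ⟨n, hn⟩ := (hφtend.eventually haU').exists
  exact hxU _ hn

lemma polyDeriv_e0 (J : MvPolynomial (Fin 2) ℂ) (q : E2) :
    polyDeriv J q ![1,0] = eval q (pderiv 0 J) := by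
  rw [polyDeriv_apply, Fin.sum_univ_two]; simp

lemma polyDeriv_e1 (J : MvPolynomial (Fin 2) ℂ) (q : E2) :
    polyDeriv J q ![0,1] = eval q (pderiv 1 J) := by
  rw [polyDeriv_apply, Fin.sum_univ_two]; simp

lemma polyDeriv_ne_zero {J : MvPolynomial (Fin 2) ℂ} {q : E2}
    (hgrad : (fun i => eval q (pderiv i J)) ≠ (0 : E2)) : polyDeriv J q ≠ 0 := by
  intro h
  apply hgrad
  funext i
  fin_cases i
  · show eval q (pderiv 0 J) = 0
    rw [← polyDeriv_e0 J q, h]; rfl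
  · show eval q (pderiv 1 J) = 0
    rw [← polyDeriv_e1 J q, h]; rfl

lemma tangent_is_Jvec {f g J J11 J12 : MvPolynomial (Fin 2) ℂ}
    (hJ11 : J11 = pderiv 0 J * pderiv 1 f - pderiv 1 J * pderiv 0 f)
    (hJ12 : J12 = pderiv 0 J * pderiv 1 g - pderiv 1 J * pderiv 0 g)
    (q : E2) (c : ℂ) :
    Fd f g q (c • ![eval q (pderiv 1 J), -(eval q (pderiv 0 J))]) =
      (-c) • ![eval q J11, eval q J12] := by
  rw [map_smul]
  funext i
  fin_cases i
  · show (c • Fd f g q ![eval q (pderiv 1 J), -(eval q (pderiv 0 J))]) 0 =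
      ((-c) • ![eval q J11, eval q J12]) 0
    rw [Pi.smul_apply, Pi.smul_apply, Fd_apply]
    simp only [Matrix.cons_val_zero]
    rw [polyDeriv_apply, Fin.sum_univ_two]
    simp only [Matrix.cons_val_zero, Matrix.cons_val_one, Matrix.head_cons, smul_eq_mul,
      hJ11, map_sub, map_mul]
    ring
  · show (c • Fd f g q ![eval q (pderiv 1 J), -(eval q (pderiv 0 J))]) 1 =
      ((-c) • ![eval q J11, eval q J12]) 1
    rw [Pi.smul_apply, Pi.smul_apply, Fd_apply]
    simp only [Matrix.cons_val_one, Matrix.head_cons]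
    rw [polyDeriv_apply, Fin.sum_univ_two]
    simp only [Matrix.cons_val_zero, Matrix.cons_val_one, Matrix.head_cons, smul_eq_mul,
      hJ12, map_sub, map_mul]
    ring

/-- The branch of the discriminant curve through `p` coming from the critical point `q`. -/
lemma branch {f g J J11 J12 : MvPolynomial (Fin 2) ℂ}
    (hJ11 : J11 = pderiv 0 J * pderiv 1 f - pderiv 1 J * pderiv 0 f)
    (hJ12 : J12 = pderiv 0 J * pderiv 1 g - pderiv 1 J * pderiv 0 g)
    {F : E2 → E2} (hF : ∀ q, F q = ![eval q f, eval q g]) {p q : E2}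
    (hq : F q = p) (hqC : eval q J = 0)
    (hgrad : (fun i => eval q (pderiv i J)) ≠ (0 : E2))
    {v : E2} (hv0 : v ≠ 0) (hvt : (∑ i, eval q (pderiv i J) * v i) = 0)
    (hdFv : fderiv ℂ F q v ≠ 0) :
    ∃ φ : E2 → ℂ, ∃ D : E2 →L[ℂ] ℂ, ∃ w : E2, ∃ d : ℂ,
      AnalyticAt ℂ φ p ∧ φ p = 0 ∧ HasFDerivAt φ D p ∧ D ≠ 0 ∧ D w = 0 ∧ w ≠ 0 ∧
      d ≠ 0 ∧ w = d • ![eval q J11, eval q J12] ∧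
      (∀ᶠ z in 𝓝 p, φ z = 0 → z ∈ F '' {x | eval x J = 0}) ∧
      (∃ U ∈ 𝓝 q, ∀ x ∈ U, eval x J = 0 → φ (F x) = 0) := by
  have hA : polyDeriv J q ≠ 0 := polyDeriv_ne_zero hgrad
  have hAv : polyDeriv J q v = 0 := by rw [polyDeriv_apply]; exact hvt
  obtain ⟨γ, v₀, hγa, hγ0, hγd, hv₀, hAv₀, hγz, hγcomp⟩ :=
    curve_of_zero_set (analyticAt_eval J q) hqC (hasFDerivAt_eval J q) hA
  -- compare v₀ with v
  obtain ⟨μ, hμ, hμv⟩ := ker_compare hA hAv hAv₀ hv0 hv₀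
  -- Fd of v is the fderiv of F
  have hFdv : Fd f g q v ≠ 0 := by
    rwa [(hasFDerivAt_F hF q).fderiv] at hdFv
  set w : E2 := Fd f g q v₀ with hw
  have hwne : w ≠ 0 := by
    rw [hw, hμv, map_smul]
    exact smul_ne_zero hμ hFdv
  -- w is proportional to the J-vector
  obtain ⟨c, hc, hcv⟩ := ker_form hA hAv₀ hv₀
  rw [polyDeriv_e0, polyDeriv_e1] at hcv
  have hwJ : w = (-c) • ![eval q J11, eval q J12] := by
    rw [hw, hcv]
    exact tangent_is_Jvec hJ11 hJ12 q c
  -- the curve in the image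
  set cF : ℂ → E2 := fun t => F (γ t) with hcF
  have hcFa : AnalyticAt ℂ cF 0 := by
    apply AnalyticAt.comp (g := F) (f := γ) ?_ hγa
    rw [hγ0]
    exact analyticAt_F hF q
  have hcF0 : cF 0 = p := by rw [hcF]; simp only [hγ0, hq]
  have hcFd : HasDerivAt cF w 0 := by
    have h1 : HasFDerivAt F (Fd f g q) (γ 0) := by rw [hγ0]; exact hasFDerivAt_F hF q
    exact h1.comp_hasDerivAt 0 hγd
  obtain ⟨φ, D, hφa, hφp, hφd, hDne, hDw, hφc, hφcomp⟩ := defining_function hcFa hcF0 hcFd hwne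
  refine ⟨φ, D, w, -c, hφa, hφp, hφd, hDne, hDw, hwne, neg_ne_zero.2 hc, hwJ, ?_, ?_⟩
  · -- points where φ vanishes are in the image of the critical set
    obtain ⟨s₀, hs₀, hs₀J⟩ := hγz.exists_mem
    have := hφcomp s₀ hs₀
    filter_upwards [this] with z hz hφz
    obtain ⟨t, hts, htz⟩ := hz hφz
    exact ⟨γ t, hs₀J t hts, htz⟩
  · -- φ ∘ F vanishes on the critical set near q
    obtain ⟨s₁, hs₁, hs₁φ⟩ := hφc.exists_mem
    obtain ⟨U, hU, hUcomp⟩ := (hγcomp s₁ hs₁).exists_mem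
    refine ⟨U, hU, ?_⟩
    intro x hxU hxJ
    obtain ⟨t, hts, htx⟩ := hUcomp x hxU hxJ
    rw [← htx]
    exact hs₁φ t hts

/-- If a proper polynomial map `F = (f,g)` has exactly two critical preimages
`q₁ ≠ q₂` of `p ∈ Δ(F)`, both smooth points of `C(F)` where `dF|T C(F)` is
nonzero, then `Δ(F)` has a normal crossing at `p` iff the vectors
`(J₁,₁(qᵢ), J₁,₂(qᵢ))`, `i = 1,2`, are linearly independent. -/
theorem normal_crossing_iff (f g J J11 J12 : MvPolynomial (Fin 2) ℂ)
    (hJ : J = pderiv 0 f * pderiv 1 g - pderiv 1 f * pderiv 0 g)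
    (hJ11 : J11 = pderiv 0 J * pderiv 1 f - pderiv 1 J * pderiv 0 f)
    (hJ12 : J12 = pderiv 0 J * pderiv 1 g - pderiv 1 J * pderiv 0 g)
    (F : (Fin 2 → ℂ) → (Fin 2 → ℂ))
    (hF : ∀ q, F q = ![eval q f, eval q g])
    (hproper : IsProperMap F)
    (C : Set (Fin 2 → ℂ)) (hC : C = {q | eval q J = 0})
    (p q1 q2 : Fin 2 → ℂ) (hq12 : q1 ≠ q2)
    (hfib : F ⁻¹' {p} ∩ C = {q1, q2})
    (hsmooth : ∀ q ∈ ({q1, q2} : Set (Fin 2 → ℂ)),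
      (fun i => eval q (pderiv i J)) ≠ (0 : Fin 2 → ℂ))
    (hdF : ∀ q ∈ ({q1, q2} : Set (Fin 2 → ℂ)),
      ∃ v : Fin 2 → ℂ, v ≠ 0 ∧ (∑ i, eval q (pderiv i J) * v i) = 0 ∧
        fderiv ℂ F q v ≠ 0) :
    NormalCrossingAt (F '' C) p ↔
      eval q1 J11 * eval q2 J12 - eval q1 J12 * eval q2 J11 ≠ 0 := by
  subst hC
  -- basic facts about q1 and q2
  have hq1m : q1 ∈ F ⁻¹' {p} ∩ {q | eval q J = 0} := by rw [hfib]; exact Or.inl rfl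
  have hq2m : q2 ∈ F ⁻¹' {p} ∩ {q | eval q J = 0} := by rw [hfib]; exact Or.inr rfl
  have hq1p : F q1 = p := hq1m.1
  have hq2p : F q2 = p := hq2m.1
  have hq1C : eval q1 J = 0 := hq1m.2
  have hq2C : eval q2 J = 0 := hq2m.2
  obtain ⟨v1, hv1ne, hv1t, hv1d⟩ := hdF q1 (Or.inl rfl)
  obtain ⟨v2, hv2ne, hv2t, hv2d⟩ := hdF q2 (Or.inr rfl)
  obtain ⟨φ1, D1, w1, d1, hφ1a, hφ1p, hφ1d, hD1ne, hD1w, hw1ne, hd1ne, hw1J, ha1, hb1⟩ :=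
    branch hJ11 hJ12 hF hq1p hq1C (hsmooth q1 (Or.inl rfl)) hv1ne hv1t hv1d
  obtain ⟨φ2, D2, w2, d2, hφ2a, hφ2p, hφ2d, hD2ne, hD2w, hw2ne, hd2ne, hw2J, ha2, hb2⟩ :=
    branch hJ11 hJ12 hF hq2p hq2C (hsmooth q2 (Or.inr rfl)) hv2ne hv2t hv2d
  obtain ⟨U1, hU1, hU1c⟩ := hb1
  obtain ⟨U2, hU2, hU2c⟩ := hb2
  -- the local description of the discriminant
  have hDELTA : ∀ᶠ z in 𝓝 p,
      (z ∈ F '' {q | eval q J = 0} ↔ (φ1 z = 0 ∨ φ2 z = 0)) := by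
    filter_upwards [proper_localization hproper hfib hU1 hU2, ha1, ha2] with z hz h1 h2
    constructor
    · rintro ⟨x, hxC, hxF⟩
      rcases hz x hxC hxF with hx | hx
      · exact Or.inl (by rw [← hxF]; exact hU1c x hx hxC)
      · exact Or.inr (by rw [← hxF]; exact hU2c x hx hxC)
    · rintro (hφ | hφ)
      · exact h1 hφ
      · exact h2 hφ
  -- the determinant of the J-vectors
  set Jv1 : E2 := ![eval q1 J11, eval q1 J12] with hJv1
  set Jv2 : E2 := ![eval q2 J11, eval q2 J12] with hJv2
  have hdet_eq : det2 Jv1 Jv2 =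
      eval q1 J11 * eval q2 J12 - eval q1 J12 * eval q2 J11 := by
    rw [det2_def]
    simp [hJv1, hJv2]
  have hJv1ne : Jv1 ≠ 0 := by
    intro h
    apply hw1ne
    rw [hw1J, h, smul_zero]
  have hJv2ne : Jv2 ≠ 0 := by
    intro h
    apply hw2ne
    rw [hw2J, h, smul_zero]
  constructor
  · -- normal crossing implies the vectors are independent
    rintro ⟨φ, ψ, hφa, hψa, hφp, hψp, hind, hiff⟩ hdet0
    -- the tangents are parallel
    have hdet2 : det2 Jv1 Jv2 = 0 := by rw [hdet_eq]; exact hdet0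
    obtain ⟨ν, hν, hνJ⟩ := parallel_of_det2_zero hdet2 hJv1ne hJv2ne
    have hw2w1 : w2 = (d2 * ν * d1⁻¹) • w1 := by
      rw [hw2J, hνJ, hw1J]
      rw [smul_smul, smul_smul]
      congr 1
      field_simp
    have hD2w1 : D2 w1 = 0 := by
      have h1 : D2 w2 = (d2 * ν * d1⁻¹) * D2 w1 := by rw [hw2w1, map_smul, smul_eq_mul]
      rw [hD2w] at h1
      have hne : d2 * ν * d1⁻¹ ≠ 0 := by
        apply mul_ne_zero (mul_ne_zero hd2ne hν) (inv_ne_zero hd1ne)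
      field_simp at h1
      have h1' : d2 * ν * D2 w1 = 0 := by rw [← h1]; ring
      exact (mul_eq_zero.1 h1').resolve_left (mul_ne_zero hd2ne hν)
    -- first zset application : the branch through q1 is inside {φ = 0} ∪ {ψ = 0}
    have hev1 : ∀ᶠ z in 𝓝 p, φ1 z = 0 → (φ z = 0 ∨ ψ z = 0) := by
      filter_upwards [hDELTA, hiff] with z h1 h2 h3
      exact h2.1 (h1.2 (Or.inl h3))
    have hz1 := zset hφ1a hφ1p hφ1d hD1ne hφa hφp hψa hψp hev1 hw1ne hD1w
    -- in either case we find a common kernel vector for fderiv φ p and fderiv ψ p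
    have hφne : fderiv ℂ φ p ≠ 0 := by simpa using hind.ne_zero 0
    have hψne : fderiv ℂ ψ p ≠ 0 := by simpa using hind.ne_zero 1
    rcases hz1 with hker | hker
    · -- fderiv φ p kills w1 ; take u₀ in the kernel of fderiv ψ p
      obtain ⟨u₀, hu₀ne, hu₀ker⟩ := exists_ker _ hψne
      have hev2 : ∀ᶠ z in 𝓝 p, ψ z = 0 → (φ1 z = 0 ∨ φ2 z = 0) := by
        filter_upwards [hDELTA, hiff] with z h1 h2 h3
        exact h1.1 (h2.2 (Or.inr h3))
      have hz2 := zset hψa hψp (hψa.differentiableAt.hasFDerivAt) hψne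
        hφ1a hφ1p hφ2a hφ2p hev2 hu₀ne hu₀ker
      rw [hφ1d.fderiv, hφ2d.fderiv] at hz2
      have hu₀w : ∃ ρ : ℂ, ρ ≠ 0 ∧ u₀ = ρ • w1 := by
        rcases hz2 with h | h
        · exact ker_compare hD1ne hD1w h hw1ne hu₀ne
        · exact ker_compare hD2ne hD2w1 h hw1ne hu₀ne
      obtain ⟨ρ, hρ, hρw⟩ := hu₀w
      have hφu : fderiv ℂ φ p u₀ = 0 := by
        rw [hρw, map_smul, hker, smul_zero]
      exact dep_funct hu₀ne hφu hu₀ker hind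
    · -- fderiv ψ p kills w1 ; take u₀ in the kernel of fderiv φ p
      obtain ⟨u₀, hu₀ne, hu₀ker⟩ := exists_ker _ hφne
      have hev2 : ∀ᶠ z in 𝓝 p, φ z = 0 → (φ1 z = 0 ∨ φ2 z = 0) := by
        filter_upwards [hDELTA, hiff] with z h1 h2 h3
        exact h1.1 (h2.2 (Or.inl h3))
      have hz2 := zset hφa hφp (hφa.differentiableAt.hasFDerivAt) hφne
        hφ1a hφ1p hφ2a hφ2p hev2 hu₀ne hu₀ker
      rw [hφ1d.fderiv, hφ2d.fderiv] at hz2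
      have hu₀w : ∃ ρ : ℂ, ρ ≠ 0 ∧ u₀ = ρ • w1 := by
        rcases hz2 with h | h
        · exact ker_compare hD1ne hD1w h hw1ne hu₀ne
        · exact ker_compare hD2ne hD2w1 h hw1ne hu₀ne
      obtain ⟨ρ, hρ, hρw⟩ := hu₀w
      have hψu : fderiv ℂ ψ p u₀ = 0 := by
        rw [hρw, map_smul, hker, smul_zero]
      exact dep_funct hu₀ne hu₀ker hψu hind
  · -- independence of the vectors implies normal crossing
    intro hdet
    have hdet2 : det2 w1 w2 ≠ 0 := by
      rw [hw1J, hw2J, det2_smul_smul, hdet_eq]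
      exact mul_ne_zero (mul_ne_zero hd1ne hd2ne) hdet
    have hind : LinearIndependent ℂ ![D1, D2] :=
      indep_funct hD1w hD2w hD1ne hD2ne hw1ne hw2ne hdet2
    refine ⟨φ1, φ2, hφ1a, hφ2a, hφ1p, hφ2p, ?_, hDELTA⟩
    have h1 : ![fderiv ℂ φ1 p, fderiv ℂ φ2 p] = ![D1, D2] := by
      rw [hφ1d.fderiv, hφ2d.fderiv]
    rw [h1]
    exact hind

end NormalCrossingAux
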